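/- Fix c ∈ (−1,1) and let G(t) = h((1+c)/2) − (1/2)·h((1+c+t)/2) − (1/2)·h((1+c−t)/2) for t ∈ [−(1−|c|), 1−|c|]. Then G attains its maximum over this interval at the endpoints t = ±(1−|c|), and the maximum value equals h((1+c)/2) − (1/2)·h(|c|). -/

import Mathlib

/-- Binary entropy in bits (with `h 0 = h 1 = 0` since `logb 2 0 = 0`). -/
noncomputable def binEnt (p : ℝ) : ℝ := -(p * Real.logb 2 p) - (1 - p) * Real.logb 2 (1 - p)

lemma binEnt_eq (p : ℝ) : binEnt p = Real.binEntropy p / Real.log 2 := by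
  simp [binEnt, Real.binEntropy, Real.logb, Real.log_inv]
  ring

lemma binEnt_zero : binEnt 0 = 0 := by simp [binEnt_eq]

lemma binEnt_one : binEnt 1 = 0 := by simp [binEnt_eq]

lemma binEnt_one_sub (p : ℝ) : binEnt (1 - p) = binEnt p := by
  simp [binEnt_eq]

lemma concave_binEnt : ConcaveOn ℝ (Set.Icc 0 1) binEnt := by
  have h := Real.strictConcave_binEntropy.concaveOn
  have : binEnt = fun p => (Real.log 2)⁻¹ • Real.binEntropy p := by
    funext p; simp [binEnt_eq, smul_eq_mul]; ring
  rw [this]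
  exact h.smul (by positivity)

/-- Sum of entropies lower bound via concavity. -/
lemma sum_ent_concave (c : ℝ) (x y : ℝ) (a b : ℝ)
    (hx1 : (1 + c + x) / 2 ∈ Set.Icc (0:ℝ) 1) (hx2 : (1 + c - x) / 2 ∈ Set.Icc (0:ℝ) 1)
    (hy1 : (1 + c + y) / 2 ∈ Set.Icc (0:ℝ) 1) (hy2 : (1 + c - y) / 2 ∈ Set.Icc (0:ℝ) 1)
    (ha : 0 ≤ a) (hb : 0 ≤ b) (hab : a + b = 1) :
    a * (binEnt ((1 + c + x) / 2) + binEnt ((1 + c - x) / 2))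
      + b * (binEnt ((1 + c + y) / 2) + binEnt ((1 + c - y) / 2))
    ≤ binEnt ((1 + c + (a * x + b * y)) / 2) + binEnt ((1 + c - (a * x + b * y)) / 2) := by
  have h1 := concave_binEnt.2 hx1 hy1 ha hb hab
  have h2 := concave_binEnt.2 hx2 hy2 ha hb hab
  have e1 : a • ((1 + c + x) / 2) + b • ((1 + c + y) / 2) = (1 + c + (a * x + b * y)) / 2 := by
    simp only [smul_eq_mul]; linear_combination ((1 + c) / 2) * hab
  have e2 : a • ((1 + c - x) / 2) + b • ((1 + c - y) / 2) = (1 + c - (a * x + b * y)) / 2 := by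
    simp only [smul_eq_mul]; linear_combination ((1 + c) / 2) * hab
  rw [e1] at h1; rw [e2] at h2
  simp only [smul_eq_mul] at h1 h2
  nlinarith

/-- The mutual information `G(t)` attains its maximum at the endpoints
`t = ±(1 - |c|)`, with maximum value `h((1+c)/2) - (1/2)·h(|c|)`. -/
theorem mi_max_at_endpoints (c : ℝ) (hc : c ∈ Set.Ioo (-1 : ℝ) 1)
    (G : ℝ → ℝ)
    (hG : G = fun t => binEnt ((1 + c) / 2) - (1 / 2) * binEnt ((1 + c + t) / 2)
      - (1 / 2) * binEnt ((1 + c - t) / 2)) :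
    (∀ t ∈ Set.Icc (-(1 - |c|)) (1 - |c|),
        G t ≤ binEnt ((1 + c) / 2) - (1 / 2) * binEnt |c|) ∧
    G (1 - |c|) = binEnt ((1 + c) / 2) - (1 / 2) * binEnt |c| ∧
    G (-(1 - |c|)) = binEnt ((1 + c) / 2) - (1 / 2) * binEnt |c| := by
  obtain ⟨hc1, hc2⟩ := hc
  have habs : |c| < 1 := abs_lt.mpr ⟨hc1, hc2⟩
  set e : ℝ := 1 - |c| with he
  have he0 : 0 < e := by simp [he]; linarith
  -- endpoint values
  have key_plus : binEnt ((1 + c + e) / 2) + binEnt ((1 + c - e) / 2) = binEnt |c| := by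
    rcases abs_cases c with ⟨h1, h2⟩ | ⟨h1, h2⟩
    · have : (1 + c + e) / 2 = 1 := by rw [he, h1]; ring
      rw [this, binEnt_one]
      have : (1 + c - e) / 2 = c := by rw [he, h1]; ring
      rw [this, h1]; ring
    · have : (1 + c + e) / 2 = 1 + c := by rw [he, h1]; ring
      rw [this]
      have : (1 + c - e) / 2 = 0 := by rw [he, h1]; ring
      rw [this, binEnt_zero]
      have : (1:ℝ) + c = 1 - |c| := by rw [h1]; ring
      rw [this, binEnt_one_sub]; ring
  have key_minus : binEnt ((1 + c + -e) / 2) + binEnt ((1 + c - -e) / 2) = binEnt |c| := by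
    have h1 : (1 + c + -e) / 2 = (1 + c - e) / 2 := by ring
    have h2 : (1 + c - -e) / 2 = (1 + c + e) / 2 := by ring
    rw [h1, h2]; linarith [key_plus]
  have hmem : ∀ t ∈ Set.Icc (-e) e, (1 + c + t) / 2 ∈ Set.Icc (0:ℝ) 1 ∧
      (1 + c - t) / 2 ∈ Set.Icc (0:ℝ) 1 := by
    intro t ⟨ht1, ht2⟩
    have hca : -|c| ≤ c := neg_abs_le c
    have hca' : c ≤ |c| := le_abs_self c
    constructor <;> constructor <;> simp only [he] at ht1 ht2 ⊢ <;> nlinarith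
  refine ⟨?_, ?_, ?_⟩
  · intro t ⟨ht1, ht2⟩
    -- write t = a * (-e) + b * e
    set a : ℝ := (e - t) / (2 * e) with ha
    set b : ℝ := (t + e) / (2 * e) with hb
    have ha0 : 0 ≤ a := by apply div_nonneg <;> linarith
    have hb0 : 0 ≤ b := by apply div_nonneg <;> linarith
    have hab : a + b = 1 := by rw [ha, hb, ← add_div, div_eq_one_iff_eq (mul_pos two_pos he0).ne']; ring
    have hrep : a * (-e) + b * e = t := by rw [ha, hb, div_mul_eq_mul_div, div_mul_eq_mul_div, ← add_div, div_eq_iff (mul_pos two_pos he0).ne']; ring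
    have hmx := hmem (-e) ⟨le_refl _, by linarith⟩
    have hmy := hmem e ⟨by linarith, le_refl _⟩
    have hmt := hmem t ⟨ht1, ht2⟩
    have h := sum_ent_concave c (-e) e a b hmx.1 hmx.2 hmy.1 hmy.2 ha0 hb0 hab
    rw [hrep] at h
    have hsum : binEnt |c| ≤ binEnt ((1 + c + t) / 2) + binEnt ((1 + c - t) / 2) := by
      calc binEnt |c| = a * binEnt |c| + b * binEnt |c| := by linear_combination (-(binEnt |c|)) * hab
        _ = a * (binEnt ((1 + c + -e) / 2) + binEnt ((1 + c - -e) / 2))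
            + b * (binEnt ((1 + c + e) / 2) + binEnt ((1 + c - e) / 2)) := by
            rw [key_minus, key_plus]
        _ ≤ _ := h
    rw [hG]; simp only; linarith
  · rw [hG]; simp only; linarith [key_plus]
  · rw [hG]; simp only; linarith [key_minus]
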